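/- For all m, n ≥ 1, the combinatorial join assignment (A, B, (i;j)) ↦ A ∗_{(i;j)} B is a bijection from the set of quadruples consisting of an ordered partition A of {1,…,m} into k blocks, an ordered partition B of {1,…,n} into l blocks, an integer s with max{k,l} ≤ s ≤ k+l, and complementary increasing index sequences (i;j) = (i_1<⋯<i_k ; j_1<⋯<j_l) in {1,…,s} with {i_1,…,i_k} ∪ {j_1,…,j_l} = {1,…,s}, onto the set of all ordered partitions of {1,…,m+n}. In particular, every ordered partition of {1,…,m+n} admits a unique decomposition as a combinatorial join A ∗_{(i;j)} B of an ordered partition of {1,…,m} and an ordered partition of {1,…,n}. -/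

import Mathlib

/-- `C : Fin s → Finset (Fin N)` is an ordered partition of `{1,…,N}` into `s` blocks:
the blocks are nonempty, pairwise disjoint, and cover `{1,…,N}`. -/
def IsOrderedPartition {N s : ℕ} (C : Fin s → Finset (Fin N)) : Prop :=
  (∀ r, (C r).Nonempty) ∧
  (∀ r r', r ≠ r' → Disjoint (C r) (C r')) ∧
  (∀ x, ∃ r, x ∈ C r)

/-- The data of a combinatorial join: an ordered partition `A` of `{1,…,m}` into `k`
blocks, an ordered partition `B` of `{1,…,n}` into `l` blocks, an integer `s` with
`max{k,l} ≤ s ≤ k+l`, and increasing index sequences `i_1 < ⋯ < i_k` and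
`j_1 < ⋯ < j_l` in `{1,…,s}` (encoded as strictly monotone maps `ι : Fin k → Fin s`
and `κ : Fin l → Fin s`) whose ranges together cover `{1,…,s}`. -/
structure JoinData (m n : ℕ) where
  k : ℕ
  l : ℕ
  A : Fin k → Finset (Fin m)
  B : Fin l → Finset (Fin n)
  hA : IsOrderedPartition A
  hB : IsOrderedPartition B
  s : ℕ
  hs1 : max k l ≤ s
  hs2 : s ≤ k + l
  ι : Fin k → Fin s
  κ : Fin l → Fin s
  hι : StrictMono ι
  hκ : StrictMono κ
  hcover : ∀ r : Fin s, (∃ t, ι t = r) ∨ (∃ t, κ t = r)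

/-- The blocks of the combinatorial join `A ∗_{(i;j)} B`: the `r`-th block is
`A′_r ∪ (B′_r + m)`, where `A′_{ι t} = A_t` (embedded in the first `m` elements of
`{1,…,m+n}`) and `A′_r = ∅` otherwise, and `B′_{κ t} = B_t + m` and `B′_r = ∅`
otherwise. -/
def joinBlocks {m n : ℕ} (d : JoinData m n) : Fin d.s → Finset (Fin (m + n)) :=
  fun r =>
    ((Finset.univ.filter fun t => d.ι t = r).biUnion fun t =>
        (d.A t).image (Fin.castAdd n)) ∪
    ((Finset.univ.filter fun t => d.κ t = r).biUnion fun t =>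
        (d.B t).image (Fin.natAdd m))

section AuxiliaryLemmas

lemma castAdd_ne_natAdd {m n : ℕ} (a : Fin m) (b : Fin n) :
    Fin.castAdd n a ≠ Fin.natAdd m b := by
  intro h
  have := congrArg Fin.val h
  simp [Fin.castAdd, Fin.natAdd] at this
  omega

lemma mem_joinBlocks_castAdd {m n : ℕ} (d : JoinData m n) (a : Fin m) (r : Fin d.s) :
    Fin.castAdd n a ∈ joinBlocks d r ↔ ∃ t, d.ι t = r ∧ a ∈ d.A t := by
  constructor
  · intro h
    rcases Finset.mem_union.1 h with h | h
    · rcases Finset.mem_biUnion.1 h with ⟨t, ht, hx⟩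
      rcases Finset.mem_image.1 hx with ⟨a', ha', hEq⟩
      have ha : a' = a := by
        have := congrArg Fin.val hEq
        simpa [Fin.ext_iff] using this
      exact ⟨t, (Finset.mem_filter.1 ht).2, ha ▸ ha'⟩
    · rcases Finset.mem_biUnion.1 h with ⟨t, ht, hx⟩
      rcases Finset.mem_image.1 hx with ⟨b, hb, hEq⟩
      exact absurd hEq.symm (castAdd_ne_natAdd a b)
  · rintro ⟨t, htr, ha⟩
    exact Finset.mem_union_left _ (Finset.mem_biUnion.2
      ⟨t, Finset.mem_filter.2 ⟨Finset.mem_univ _, htr⟩, Finset.mem_image_of_mem _ ha⟩)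

lemma mem_joinBlocks_natAdd {m n : ℕ} (d : JoinData m n) (b : Fin n) (r : Fin d.s) :
    Fin.natAdd m b ∈ joinBlocks d r ↔ ∃ t, d.κ t = r ∧ b ∈ d.B t := by
  constructor
  · intro h
    rcases Finset.mem_union.1 h with h | h
    · rcases Finset.mem_biUnion.1 h with ⟨t, ht, hx⟩
      rcases Finset.mem_image.1 hx with ⟨a, ha, hEq⟩
      exact absurd hEq (castAdd_ne_natAdd a b)
    · rcases Finset.mem_biUnion.1 h with ⟨t, ht, hx⟩
      rcases Finset.mem_image.1 hx with ⟨b', hb', hEq⟩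
      have hb : b' = b := by
        have := congrArg Fin.val hEq
        simp [Fin.ext_iff] at this ⊢
        omega
      exact ⟨t, (Finset.mem_filter.1 ht).2, hb ▸ hb'⟩
  · rintro ⟨t, htr, hb⟩
    exact Finset.mem_union_right _ (Finset.mem_biUnion.2
      ⟨t, Finset.mem_filter.2 ⟨Finset.mem_univ _, htr⟩, Finset.mem_image_of_mem _ hb⟩)

lemma joinBlocks_isOrderedPartition {m n : ℕ} (d : JoinData m n) :
    IsOrderedPartition (joinBlocks d) := by
  refine ⟨?_, ?_, ?_⟩
  · intro r
    rcases d.hcover r with ⟨t, ht⟩ | ⟨t, ht⟩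
    · obtain ⟨a, ha⟩ := d.hA.1 t
      exact ⟨Fin.castAdd n a, (mem_joinBlocks_castAdd d a r).2 ⟨t, ht, ha⟩⟩
    · obtain ⟨b, hb⟩ := d.hB.1 t
      exact ⟨Fin.natAdd m b, (mem_joinBlocks_natAdd d b r).2 ⟨t, ht, hb⟩⟩
  · intro r r' hrr
    rw [Finset.disjoint_left]
    intro x hx hx'
    induction x using Fin.addCases with
    | left a =>
      obtain ⟨t, ht, ha⟩ := (mem_joinBlocks_castAdd d a r).1 hx
      obtain ⟨t', ht', ha'⟩ := (mem_joinBlocks_castAdd d a r').1 hx'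
      have htt : t ≠ t' := fun h => hrr (by rw [← ht, ← ht', h])
      exact Finset.disjoint_left.1 (d.hA.2.1 t t' htt) ha ha'
    | right b =>
      obtain ⟨t, ht, hb⟩ := (mem_joinBlocks_natAdd d b r).1 hx
      obtain ⟨t', ht', hb'⟩ := (mem_joinBlocks_natAdd d b r').1 hx'
      have htt : t ≠ t' := fun h => hrr (by rw [← ht, ← ht', h])
      exact Finset.disjoint_left.1 (d.hB.2.1 t t' htt) hb hb'
  · intro x
    induction x using Fin.addCases with
    | left a =>
      obtain ⟨t, ht⟩ := d.hA.2.2 a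
      exact ⟨d.ι t, (mem_joinBlocks_castAdd d a _).2 ⟨t, rfl, ht⟩⟩
    | right b =>
      obtain ⟨t, ht⟩ := d.hB.2.2 b
      exact ⟨d.κ t, (mem_joinBlocks_natAdd d b _).2 ⟨t, rfl, ht⟩⟩

/-- Indices of blocks containing a "left" element. -/
def leftIdx {m n s : ℕ} (P : Fin s → Finset (Fin (m + n))) : Finset (Fin s) :=
  Finset.univ.filter fun r => ∃ a : Fin m, Fin.castAdd n a ∈ P r

def rightIdx {m n s : ℕ} (P : Fin s → Finset (Fin (m + n))) : Finset (Fin s) :=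
  Finset.univ.filter fun r => ∃ b : Fin n, Fin.natAdd m b ∈ P r

lemma univ_subset_leftIdx_union_rightIdx {m n s : ℕ} {P : Fin s → Finset (Fin (m + n))}
    (hP : IsOrderedPartition P) :
    (Finset.univ : Finset (Fin s)) ⊆ leftIdx P ∪ rightIdx P := by
  intro r _
  obtain ⟨x, hx⟩ := hP.1 r
  induction x using Fin.addCases with
  | left a =>
    exact Finset.mem_union_left _ (Finset.mem_filter.2 ⟨Finset.mem_univ _, ⟨a, hx⟩⟩)
  | right b =>
    exact Finset.mem_union_right _ (Finset.mem_filter.2 ⟨Finset.mem_univ _, ⟨b, hx⟩⟩)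

/-- The decomposition of an ordered partition of `{1,…,m+n}` as a combinatorial join. -/
def decomp {m n : ℕ} (s : ℕ) (P : Fin s → Finset (Fin (m + n)))
    (hP : IsOrderedPartition P) : JoinData m n where
  k := (leftIdx P).card
  l := (rightIdx P).card
  A := fun t => Finset.univ.filter fun a =>
    Fin.castAdd n a ∈ P ((leftIdx P).orderEmbOfFin rfl t)
  B := fun t => Finset.univ.filter fun b =>
    Fin.natAdd m b ∈ P ((rightIdx P).orderEmbOfFin rfl t)
  hA := by
    refine ⟨?_, ?_, ?_⟩
    · intro t
      have h := (leftIdx P).orderEmbOfFin_mem rfl t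
      obtain ⟨a, ha⟩ := (Finset.mem_filter.1 h).2
      exact ⟨a, Finset.mem_filter.2 ⟨Finset.mem_univ _, ha⟩⟩
    · intro t t' htt
      rw [Finset.disjoint_left]
      intro a ha ha'
      have h1 := (Finset.mem_filter.1 ha).2
      have h2 := (Finset.mem_filter.1 ha').2
      have hne : (leftIdx P).orderEmbOfFin rfl t ≠ (leftIdx P).orderEmbOfFin rfl t' :=
        fun h => htt (((leftIdx P).orderEmbOfFin rfl).injective h)
      exact Finset.disjoint_left.1 (hP.2.1 _ _ hne) h1 h2
    · intro a
      obtain ⟨r, hr⟩ := hP.2.2 (Fin.castAdd n a)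
      have hrI : r ∈ leftIdx P := Finset.mem_filter.2 ⟨Finset.mem_univ _, ⟨a, hr⟩⟩
      have : r ∈ Set.range ((leftIdx P).orderEmbOfFin rfl) := by
        rw [Finset.range_orderEmbOfFin]; exact hrI
      obtain ⟨t, ht⟩ := this
      exact ⟨t, Finset.mem_filter.2 ⟨Finset.mem_univ _, ht ▸ hr⟩⟩
  hB := by
    refine ⟨?_, ?_, ?_⟩
    · intro t
      have h := (rightIdx P).orderEmbOfFin_mem rfl t
      obtain ⟨b, hb⟩ := (Finset.mem_filter.1 h).2
      exact ⟨b, Finset.mem_filter.2 ⟨Finset.mem_univ _, hb⟩⟩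
    · intro t t' htt
      rw [Finset.disjoint_left]
      intro b hb hb'
      have h1 := (Finset.mem_filter.1 hb).2
      have h2 := (Finset.mem_filter.1 hb').2
      have hne : (rightIdx P).orderEmbOfFin rfl t ≠ (rightIdx P).orderEmbOfFin rfl t' :=
        fun h => htt (((rightIdx P).orderEmbOfFin rfl).injective h)
      exact Finset.disjoint_left.1 (hP.2.1 _ _ hne) h1 h2
    · intro b
      obtain ⟨r, hr⟩ := hP.2.2 (Fin.natAdd m b)
      have hrI : r ∈ rightIdx P := Finset.mem_filter.2 ⟨Finset.mem_univ _, ⟨b, hr⟩⟩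
      have : r ∈ Set.range ((rightIdx P).orderEmbOfFin rfl) := by
        rw [Finset.range_orderEmbOfFin]; exact hrI
      obtain ⟨t, ht⟩ := this
      exact ⟨t, Finset.mem_filter.2 ⟨Finset.mem_univ _, ht ▸ hr⟩⟩
  s := s
  hs1 := by
    have h1 : (leftIdx P).card ≤ s := by
      simpa using Finset.card_le_card (Finset.subset_univ (leftIdx P))
    have h2 : (rightIdx P).card ≤ s := by
      simpa using Finset.card_le_card (Finset.subset_univ (rightIdx P))
    exact max_le h1 h2
  hs2 := by
    calc s = (Finset.univ : Finset (Fin s)).card := by simp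
    _ ≤ (leftIdx P ∪ rightIdx P).card :=
        Finset.card_le_card (univ_subset_leftIdx_union_rightIdx hP)
    _ ≤ (leftIdx P).card + (rightIdx P).card := Finset.card_union_le _ _
  ι := fun t => (leftIdx P).orderEmbOfFin rfl t
  κ := fun t => (rightIdx P).orderEmbOfFin rfl t
  hι := ((leftIdx P).orderEmbOfFin rfl).strictMono
  hκ := ((rightIdx P).orderEmbOfFin rfl).strictMono
  hcover := by
    intro r
    have hr := univ_subset_leftIdx_union_rightIdx hP (Finset.mem_univ r)
    rcases Finset.mem_union.1 hr with h | h
    · left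
      have : r ∈ Set.range ((leftIdx P).orderEmbOfFin rfl) := by
        rw [Finset.range_orderEmbOfFin]; exact h
      exact this
    · right
      have : r ∈ Set.range ((rightIdx P).orderEmbOfFin rfl) := by
        rw [Finset.range_orderEmbOfFin]; exact h
      exact this

lemma joinBlocks_decomp {m n : ℕ} (s : ℕ) (P : Fin s → Finset (Fin (m + n)))
    (hP : IsOrderedPartition P) : joinBlocks (decomp s P hP) = P := by
  funext r
  ext x
  constructor
  · intro hx
    induction x using Fin.addCases with
    | left a =>
      obtain ⟨t, ht, ha⟩ := (mem_joinBlocks_castAdd (decomp s P hP) a r).1 hx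
      have := (Finset.mem_filter.1 ha).2
      show Fin.castAdd n a ∈ P r
      have hιt : (decomp s P hP).ι t = r := ht
      rw [← hιt]
      exact this
    | right b =>
      obtain ⟨t, ht, hb⟩ := (mem_joinBlocks_natAdd (decomp s P hP) b r).1 hx
      have := (Finset.mem_filter.1 hb).2
      show Fin.natAdd m b ∈ P r
      rw [← ht]
      exact this
  · intro hx
    induction x using Fin.addCases with
    | left a =>
      have hrI : r ∈ leftIdx P := Finset.mem_filter.2 ⟨Finset.mem_univ _, ⟨a, hx⟩⟩
      have : r ∈ Set.range ((leftIdx P).orderEmbOfFin rfl) := by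
        rw [Finset.range_orderEmbOfFin]; exact hrI
      obtain ⟨t, ht⟩ := this
      refine (mem_joinBlocks_castAdd (decomp s P hP) a r).2 ⟨t, ht, ?_⟩
      exact Finset.mem_filter.2 ⟨Finset.mem_univ _, by rw [ht]; exact hx⟩
    | right b =>
      have hrI : r ∈ rightIdx P := Finset.mem_filter.2 ⟨Finset.mem_univ _, ⟨b, hx⟩⟩
      have : r ∈ Set.range ((rightIdx P).orderEmbOfFin rfl) := by
        rw [Finset.range_orderEmbOfFin]; exact hrI
      obtain ⟨t, ht⟩ := this
      refine (mem_joinBlocks_natAdd (decomp s P hP) b r).2 ⟨t, ht, ?_⟩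
      exact Finset.mem_filter.2 ⟨Finset.mem_univ _, by rw [ht]; exact hx⟩

lemma JoinData.ext' {m n : ℕ} {d1 d2 : JoinData m n}
    (hk : d1.k = d2.k) (hl : d1.l = d2.l) (hs : d1.s = d2.s)
    (hA : ∀ t, d1.A t = d2.A (Fin.cast hk t))
    (hB : ∀ t, d1.B t = d2.B (Fin.cast hl t))
    (hι : ∀ t, (d1.ι t).val = (d2.ι (Fin.cast hk t)).val)
    (hκ : ∀ t, (d1.κ t).val = (d2.κ (Fin.cast hl t)).val) :
    d1 = d2 := by
  obtain ⟨k1, l1, A1, B1, hA1, hB1, s1, _, _, ι1, κ1, _, _, _⟩ := d1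
  obtain ⟨k2, l2, A2, B2, hA2, hB2, s2, _, _, ι2, κ2, _, _, _⟩ := d2
  dsimp at hk hl hs hA hB hι hκ
  subst hk; subst hl; subst hs
  have eA : A1 = A2 := funext fun t => hA t
  have eB : B1 = B2 := funext fun t => hB t
  have eι : ι1 = ι2 := funext fun t => Fin.ext (hι t)
  have eκ : κ1 = κ2 := funext fun t => Fin.ext (hκ t)
  subst eA; subst eB; subst eι; subst eκ
  rfl

lemma leftIdx_joinBlocks {m n : ℕ} (d : JoinData m n) :
    leftIdx (joinBlocks d) = Finset.image d.ι Finset.univ := by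
  ext r
  simp only [leftIdx, Finset.mem_filter, Finset.mem_univ, true_and, Finset.mem_image]
  constructor
  · rintro ⟨a, ha⟩
    obtain ⟨t, ht, -⟩ := (mem_joinBlocks_castAdd d a r).1 ha
    exact ⟨t, ht⟩
  · rintro ⟨t, ht⟩
    obtain ⟨a, ha⟩ := d.hA.1 t
    exact ⟨a, (mem_joinBlocks_castAdd d a r).2 ⟨t, ht, ha⟩⟩

lemma rightIdx_joinBlocks {m n : ℕ} (d : JoinData m n) :
    rightIdx (joinBlocks d) = Finset.image d.κ Finset.univ := by
  ext r
  simp only [rightIdx, Finset.mem_filter, Finset.mem_univ, true_and, Finset.mem_image]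
  constructor
  · rintro ⟨b, hb⟩
    obtain ⟨t, ht, -⟩ := (mem_joinBlocks_natAdd d b r).1 hb
    exact ⟨t, ht⟩
  · rintro ⟨t, ht⟩
    obtain ⟨b, hb⟩ := d.hB.1 t
    exact ⟨b, (mem_joinBlocks_natAdd d b r).2 ⟨t, ht, hb⟩⟩

lemma decomp_joinBlocks {m n : ℕ} (d : JoinData m n)
    (h : IsOrderedPartition (joinBlocks d)) :
    decomp d.s (joinBlocks d) h = d := by
  have hkcard : (leftIdx (joinBlocks d)).card = d.k := by
    rw [leftIdx_joinBlocks, Finset.card_image_of_injective _ d.hι.injective,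
      Finset.card_univ, Fintype.card_fin]
  have hlcard : (rightIdx (joinBlocks d)).card = d.l := by
    rw [rightIdx_joinBlocks, Finset.card_image_of_injective _ d.hκ.injective,
      Finset.card_univ, Fintype.card_fin]
  -- the strict mono enumeration with cast agrees
  have hιeq : (fun t : Fin (leftIdx (joinBlocks d)).card => d.ι (Fin.cast hkcard t)) =
      ⇑((leftIdx (joinBlocks d)).orderEmbOfFin rfl) := by
    apply Finset.orderEmbOfFin_unique
    · intro t
      obtain ⟨a, ha⟩ := d.hA.1 (Fin.cast hkcard t)
      exact Finset.mem_filter.2 ⟨Finset.mem_univ _,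
        ⟨a, (mem_joinBlocks_castAdd d a _).2 ⟨_, rfl, ha⟩⟩⟩
    · intro t t' htt
      exact d.hι htt
  have hκeq : (fun t : Fin (rightIdx (joinBlocks d)).card => d.κ (Fin.cast hlcard t)) =
      ⇑((rightIdx (joinBlocks d)).orderEmbOfFin rfl) := by
    apply Finset.orderEmbOfFin_unique
    · intro t
      obtain ⟨b, hb⟩ := d.hB.1 (Fin.cast hlcard t)
      exact Finset.mem_filter.2 ⟨Finset.mem_univ _,
        ⟨b, (mem_joinBlocks_natAdd d b _).2 ⟨_, rfl, hb⟩⟩⟩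
    · intro t t' htt
      exact d.hκ htt
  refine JoinData.ext' hkcard hlcard rfl ?_ ?_ ?_ ?_
  · intro t
    show (Finset.univ.filter fun a =>
      Fin.castAdd n a ∈ joinBlocks d ((leftIdx (joinBlocks d)).orderEmbOfFin rfl t)) = _
    rw [← hιeq]
    ext a
    simp only [Finset.mem_filter, Finset.mem_univ, true_and]
    rw [mem_joinBlocks_castAdd]
    constructor
    · rintro ⟨t', ht', ha⟩
      rwa [d.hι.injective ht'] at ha
    · intro ha
      exact ⟨_, rfl, ha⟩
  · intro t
    show (Finset.univ.filter fun b =>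
      Fin.natAdd m b ∈ joinBlocks d ((rightIdx (joinBlocks d)).orderEmbOfFin rfl t)) = _
    rw [← hκeq]
    ext b
    simp only [Finset.mem_filter, Finset.mem_univ, true_and]
    rw [mem_joinBlocks_natAdd]
    constructor
    · rintro ⟨t', ht', hb⟩
      rwa [d.hκ.injective ht'] at hb
    · intro hb
      exact ⟨_, rfl, hb⟩
  · intro t
    show (((leftIdx (joinBlocks d)).orderEmbOfFin rfl t : Fin d.s)).val = _
    rw [← hιeq]
    rfl
  · intro t
    show (((rightIdx (joinBlocks d)).orderEmbOfFin rfl t : Fin d.s)).val = _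
    rw [← hκeq]
    rfl

end AuxiliaryLemmas

/-- For all `m, n ≥ 1`, the combinatorial join assignment
`(A, B, (i;j)) ↦ A ∗_{(i;j)} B` is a bijection from the set of such quadruples onto
the set of all ordered partitions of `{1,…,m+n}`; in particular every ordered
partition of `{1,…,m+n}` decomposes uniquely as a combinatorial join of an ordered
partition of `{1,…,m}` and an ordered partition of `{1,…,n}`. -/
theorem combinatorialJoin_bijective (m n : ℕ) (hm : 1 ≤ m) (hn : 1 ≤ n) :
    Set.BijOn
      (fun d : JoinData m n =>
        (⟨d.s, joinBlocks d⟩ : Σ s : ℕ, Fin s → Finset (Fin (m + n))))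
      Set.univ
      {P : Σ s : ℕ, Fin s → Finset (Fin (m + n)) | IsOrderedPartition P.2} := by
  refine ⟨?_, ?_, ?_⟩
  · intro d _
    exact joinBlocks_isOrderedPartition d
  · intro d1 _ d2 _ h
    have hgen : ∀ (q q' : Σ s : ℕ, Fin s → Finset (Fin (m + n)))
        (hq : IsOrderedPartition q.2) (hq' : IsOrderedPartition q'.2),
        q = q' → decomp q.1 q.2 hq = decomp q'.1 q'.2 hq' := by
      rintro q q' hq hq' rfl; rfl
    have h1 := joinBlocks_isOrderedPartition d1
    have h2 := joinBlocks_isOrderedPartition d2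
    calc d1 = decomp d1.s (joinBlocks d1) h1 := (decomp_joinBlocks d1 h1).symm
      _ = decomp d2.s (joinBlocks d2) h2 :=
          hgen ⟨d1.s, joinBlocks d1⟩ ⟨d2.s, joinBlocks d2⟩ h1 h2 h
      _ = d2 := decomp_joinBlocks d2 h2
  · intro P hP
    obtain ⟨s, P⟩ := P
    refine ⟨decomp s P hP, Set.mem_univ _, ?_⟩
    show (⟨s, joinBlocks (decomp s P hP)⟩ : Σ s : ℕ, Fin s → Finset (Fin (m + n))) = ⟨s, P⟩
    rw [joinBlocks_decomp]
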